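/- Let s be a composition of positive integers. A route R(k, t, δ) of the s-oruga graph is a vertex of the simplex Δ_w for a Stirling s-permutation w if and only if the inversion multiset of w satisfies: (1) #_w(k,i) ≥ t for all i < k with δ_i = 0; (2) #_w(k,i) ≤ t for all i < k with δ_i = 1; (3) #_w(j,i) = 0 for all i < j < k with (δ_i, δ_j) = (1,0); (4) #_w(j,i) = s_j for all i < j < k with (δ_i, δ_j) = (0,1). -/

import Mathlib

namespace SPermutahedron

/-! ### Stirling `s`-permutations -/

/-- A word avoids the pattern `121`: there is never a letter `j` strictly in
between two occurrences of a letter `i` with `i < j`. -/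
def Avoids121 (w : List ℕ) : Prop :=
  ¬ ∃ (u₁ u₂ u₃ u₄ : List ℕ) (i j : ℕ), i < j ∧
      w = u₁ ++ i :: u₂ ++ j :: u₃ ++ i :: u₄

/-- A Stirling `s`-permutation: a permutation of the word `1^{s 1} 2^{s 2} ⋯ n^{s n}`
avoiding the pattern `121`. -/
def IsStirling (s : ℕ → ℕ) (n : ℕ) (w : List ℕ) : Prop :=
  (∀ x ∈ w, 1 ≤ x ∧ x ≤ n) ∧ (∀ i, 1 ≤ i → i ≤ n → w.count i = s i) ∧ Avoids121 w

/-- `(a, c)` is an ascent of `w`: `a < c` and `ac` is a consecutive substring. -/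
def WordAscent (w : List ℕ) (a c : ℕ) : Prop :=
  a < c ∧ ∃ u v, w = u ++ a :: c :: v

/-- `(a, c)` is a descent of `w`: `a < c` and `ca` is a consecutive substring. -/
def WordDescent (w : List ℕ) (a c : ℕ) : Prop :=
  a < c ∧ ∃ u v, w = u ++ c :: a :: v

/-- The inversion multiplicity `#_w(c, a)`: the number of occurrences of `c`
preceding the `a`-block of `w` (i.e. preceding the first occurrence of `a`). -/
def invW (w : List ℕ) (c a : ℕ) : ℕ := (w.takeWhile (fun x => decide (x ≠ a))).count c

/-! ### The `s`-oruga graph, its routes, framing and coherence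

The `s`-oruga graph `G(s)` (with the convention `s (n+1) = 2`) has vertices
`v₋₁, v₀, …, vₙ`; for `i ∈ [1, n+1]` there are `s i - 1` source-edges
`(v₋₁, v_{n+1-i})` labeled `e^i_1, …, e^i_{s i - 1}`, and for `i ∈ [1, n]`
two edges `(v_{n-i}, v_{n+1-i})`, the bump `e^i_0` and the dip `e^i_{s i}`.
A route of `G(s)` is encoded by `(k, t, δ)`: it starts with the source-edge
`e^k_t` landing at `v_{n+1-k}` and then follows the bumps/dips
`e^j_{δ_j · s_j}` for `j = k-1, …, 1`. -/

/-- A route of the `s`-oruga graph, encoded by its landing level `k`, the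
index `t` of its source-edge, and the bump/dip indicator `δ`. -/
structure Route where
  k : ℕ
  t : ℕ
  δ : ℕ → Bool

/-- The extension of `s` with `s (n+1) = 2`. -/
def sExt (s : ℕ → ℕ) (n i : ℕ) : ℕ := if i = n + 1 then 2 else s i

/-- Validity of the data `(k, t, δ)` as a route of `G(s)`: `1 ≤ k ≤ n+1`,
`1 ≤ t ≤ s k - 1`, and `δ` is normalized to `false` outside `[1, k-1]`. -/
def IsRoute (s : ℕ → ℕ) (n : ℕ) (R : Route) : Prop :=
  1 ≤ R.k ∧ R.k ≤ n + 1 ∧ 1 ≤ R.t ∧ R.t + 1 ≤ sExt s n R.k ∧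
  ∀ i, i = 0 ∨ R.k ≤ i → R.δ i = false

/-- The index (in the framing order `e^i_0 ≺ e^i_1 ≺ ⋯ ≺ e^i_{s i}`) of the
incoming edge of route `R` at the vertex `v_{n+1-i}`. -/
def inLabel (s : ℕ → ℕ) (n : ℕ) (R : Route) (i : ℕ) : ℕ :=
  if i = R.k then R.t else if R.δ i then sExt s n i else 0

/-- The prefix of `R` ending at `v_{n+1-p}` is strictly smaller than that of
`R'` in the framing order: at the first vertex after which the two prefixes
coincide (i.e. at the smallest level `ℓ ≥ p` where they diverge), the incoming
edge of `R` precedes that of `R'`. -/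
def PrefLT (s : ℕ → ℕ) (n : ℕ) (R R' : Route) (p : ℕ) : Prop :=
  ∃ ℓ, p ≤ ℓ ∧ inLabel s n R ℓ < inLabel s n R' ℓ ∧
    ∀ m, p ≤ m → m < ℓ → inLabel s n R m = inLabel s n R' m

/-- The suffix of `R` starting at `v_{n+1-q}` is strictly smaller than that of
`R'` in the framing order `e^ℓ_0 ≺ e^ℓ_{s ℓ}`: at the last vertex before which
the suffixes coincide, `R` takes the bump and `R'` the dip. -/
def SufLT (R R' : Route) (q : ℕ) : Prop :=
  ∃ ℓ, 1 ≤ ℓ ∧ ℓ < q ∧ R.δ ℓ = false ∧ R'.δ ℓ = true ∧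
    ∀ m, ℓ < m → m < q → R.δ m = R'.δ m

/-- `[v_{n+1-p}, v_{n+1-q}]` is a common subroute of `R` and `R'` (the edges
strictly between coincide). -/
def CommonSub (s : ℕ → ℕ) (n : ℕ) (R R' : Route) (p q : ℕ) : Prop :=
  1 ≤ q ∧ q ≤ p ∧ p ≤ min R.k R'.k ∧
  ∀ ℓ, q ≤ ℓ → ℓ < p → inLabel s n R ℓ = inLabel s n R' ℓ

/-- `R` and `R'` are in conflict at the common subroute `[v_{n+1-p}, v_{n+1-q}]`:
their prefixes at `v_{n+1-p}` and suffixes at `v_{n+1-q}` are ordered oppositely. -/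
def ConflictAt (s : ℕ → ℕ) (n : ℕ) (R R' : Route) (p q : ℕ) : Prop :=
  CommonSub s n R R' p q ∧
  ((PrefLT s n R R' p ∧ SufLT R' R q) ∨ (PrefLT s n R' R p ∧ SufLT R R' q))

/-- `R` and `R'` are coherent: they are in conflict at no common subroute. -/
def Coherent (s : ℕ → ℕ) (n : ℕ) (R R' : Route) : Prop :=
  ∀ p q, ¬ ConflictAt s n R R' p q

/-- A clique of mutually coherent routes of the framed graph `(G(s), ⪯)`. -/
def IsClique (s : ℕ → ℕ) (n : ℕ) (C : Set Route) : Prop :=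
  (∀ R ∈ C, IsRoute s n R) ∧ ∀ R ∈ C, ∀ R' ∈ C, Coherent s n R R'

/-- A maximal clique of mutually coherent routes; by the theorem of
Danilov–Karzanov–Koshevoy these index the maximal simplices of the DKK
triangulation of the flow polytope of `(G(s), ⪯)`. -/
def IsMaxClique (s : ℕ → ℕ) (n : ℕ) (C : Set Route) : Prop :=
  IsClique s n C ∧ ∀ C', IsClique s n C' → C ⊆ C' → C' = C

/-- The route `R(u)` associated to a prefix `u` of a Stirling `s`-permutation:
with `t_a` the number of occurrences of `a` in `u`, and `c` the smallest value
with `0 < t_c < s c` (or `c = n+1`, `t = 1` if there is none), it is the route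
`(e^c_{t_c}, e^{c-1}_{t_{c-1}}, …, e^1_{t_1})`. -/
def routeOfPrefix (s : ℕ → ℕ) (n : ℕ) (u : List ℕ) : Route :=
  match (List.range' 1 n).find? (fun c => decide (0 < u.count c ∧ u.count c < s c)) with
  | some c => ⟨c, u.count c, fun i => decide (1 ≤ i ∧ i < c ∧ u.count i = s i)⟩
  | none => ⟨n + 1, 1, fun i => decide (1 ≤ i ∧ i ≤ n ∧ u.count i = s i)⟩

/-- The simplex (clique) `Δ_w` of the DKK triangulation associated to a
Stirling `s`-permutation `w`: the set of routes of the prefixes of `w`. -/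
def DeltaW (s : ℕ → ℕ) (n : ℕ) (w : List ℕ) : Set Route :=
  {R | ∃ i, i ≤ w.length ∧ R = routeOfPrefix s n (w.take i)}

/-- The inversion multiplicity extended to the virtual letter `n+1` (of which
one of its two copies is thought of as preceding the whole word), so that
`#_w(n+1, a) = 1` for every letter `a`. -/
def invWx (n : ℕ) (w : List ℕ) (c a : ℕ) : ℕ :=
  if c = n + 1 then 1 else invW w c a

/-! ### Auxiliary lemmas for the proof -/


lemma count_take_mono (l : List ℕ) (a : ℕ) {m m' : ℕ} (h : m ≤ m') :
    (l.take m).count a ≤ (l.take m').count a :=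
  (List.take_sublist_take_left (l := l) h).count_le a

lemma count_take_le (l : List ℕ) (a m : ℕ) : (l.take m).count a ≤ l.count a :=
  (List.take_sublist m l).count_le a

lemma count_take_succ_le (l : List ℕ) (m a : ℕ) :
    (l.take (m+1)).count a ≤ (l.take m).count a + 1 := by
  rw [List.take_succ, List.count_append]
  have : l[m]?.toList.count a ≤ 1 := by
    cases h : l[m]? <;> simp [List.count_cons] <;> split <;> omega
  omega

lemma count_take_succ_eq (l : List ℕ) {m a : ℕ} (b : ℕ) (hba : b ≠ a)
    (h : (l.take m).count a < (l.take (m+1)).count a) :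
    (l.take (m+1)).count b = (l.take m).count b := by
  rw [List.take_succ, List.count_append] at *
  cases ho : l[m]? with
  | none => simp [ho] at h
  | some x =>
    by_cases hxa : x = a
    · subst hxa
      simp [List.count_cons, hba, hba.symm]
    · simp [ho, List.count_cons, hxa] at h

lemma take_prefix_takeWhile {l : List ℕ} {m a : ℕ} (h : (l.take m).count a = 0) :
    l.take m <+: l.takeWhile (fun x => decide (x ≠ a)) := by
  induction l generalizing m with
  | nil => simp
  | cons x xs ih =>
    cases m with
    | zero => simp
    | succ m =>
      rw [List.take_succ_cons, List.count_cons] at h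
      have hxa : ¬ (x = a) := by intro hh; simp [hh] at h
      have h0 : (xs.take m).count a = 0 := by
        by_cases hc : x == a <;> simp [hc] at h ⊢ <;> omega
      rw [List.take_succ_cons, List.takeWhile_cons]
      simp only [hxa, decide_not]
      simpa using (ih h0)

lemma takeWhile_prefix_take {l : List ℕ} {m a : ℕ} (h : 0 < (l.take m).count a) :
    l.takeWhile (fun x => decide (x ≠ a)) <+: l.take m := by
  induction l generalizing m with
  | nil => simp at h
  | cons x xs ih =>
    cases m with
    | zero => simp at h
    | succ m =>
      rw [List.takeWhile_cons]
      by_cases hxa : x = a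
      · simp [hxa]
      · have h0 : 0 < (xs.take m).count a := by
          rw [List.take_succ_cons, List.count_cons] at h
          simp only [beq_iff_eq, hxa, if_false] at h
          omega
        simp only [hxa, decide_not]
        simpa [List.take_succ_cons] using ih h0

lemma cons_sublist_decomp {a : ℕ} {l w : List ℕ} (h : List.Sublist (a :: l) w) :
    ∃ u v, w = u ++ a :: v ∧ List.Sublist l v := by
  induction w with
  | nil => simp at h
  | cons b w' ih =>
    rcases h with _ | _ | h
    case cons h =>
      obtain ⟨u, v, rfl, hl⟩ := ih h
      exact ⟨b :: u, v, rfl, hl⟩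
    case cons_cons =>
      exact ⟨[], w', rfl, by assumption⟩

lemma no121 {w : List ℕ} (hav : Avoids121 w) {i j p q : ℕ} (hij : i < j)
    (h1 : 0 < (w.take p).count i)
    (h2 : (w.take p).count j < (w.take q).count j)
    (h3 : (w.take q).count i < w.count i) : False := by
  have hpq : p ≤ q := by
    by_contra hc
    push_neg at hc
    exact absurd (count_take_mono w j hc.le) (by omega)
  have hsplit1 : w.take p ++ (w.take q).drop p = w.take q := by
    have h' := List.take_append_drop p (w.take q)
    rwa [List.take_take, min_eq_left hpq] at h'
  have hsplit : w.take p ++ ((w.take q).drop p ++ w.drop q) = w := by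
    rw [← List.append_assoc, hsplit1, List.take_append_drop]
  have hmid : 0 < ((w.take q).drop p).count j := by
    have := congrArg (List.count j) hsplit1
    rw [List.count_append] at this
    omega
  have hlast : 0 < (w.drop q).count i := by
    have := congrArg (List.count i) (List.take_append_drop q w)
    rw [List.count_append] at this
    omega
  have s1 : List.Sublist [i] (w.take p) := List.singleton_sublist.mpr (List.count_pos_iff.mp h1)
  have s2 : List.Sublist [j] ((w.take q).drop p) :=
    List.singleton_sublist.mpr (List.count_pos_iff.mp hmid)
  have s3 : List.Sublist [i] (w.drop q) := List.singleton_sublist.mpr (List.count_pos_iff.mp hlast)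
  have ssub : List.Sublist [i, j, i] w := by
    have := (s1.append (s2.append s3))
    rwa [hsplit] at this
  obtain ⟨u₁, v₁, hw1, hsub1⟩ := cons_sublist_decomp ssub
  obtain ⟨u₂, v₂, hv1, hsub2⟩ := cons_sublist_decomp hsub1
  obtain ⟨u₃, v₃, hv2, _⟩ := cons_sublist_decomp hsub2
  exact hav ⟨u₁, u₂, u₃, v₃, i, j, hij, by simp [hw1, hv1, hv2]⟩

lemma find?_range'_eq_some {p : ℕ → Bool} : ∀ {a len c : ℕ},
    (List.range' a len).find? p = some c →
    (p c = true ∧ a ≤ c ∧ c < a + len ∧ ∀ x, a ≤ x → x < c → p x = false) := by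
  intro a len
  induction len generalizing a with
  | zero => intro c h; simp [List.range'] at h
  | succ len ih =>
    intro c h
    rw [List.range'_succ] at h
    cases hpa : p a with
    | true =>
      rw [List.find?_cons_of_pos hpa] at h
      have : a = c := Option.some.inj h
      subst this
      exact ⟨hpa, le_refl _, by omega, fun x h1 h2 => by omega⟩
    | false =>
      rw [List.find?_cons_of_neg (by simp [hpa])] at h
      obtain ⟨h1, h2, h3, h4⟩ := ih h
      refine ⟨h1, by omega, by omega, fun x hx1 hx2 => ?_⟩
      rcases eq_or_lt_of_le hx1 with rfl | hlt
      · exact hpa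
      · exact h4 x hlt hx2

lemma find?_range'_eq_some_of {p : ℕ → Bool} : ∀ {a len c : ℕ},
    a ≤ c → c < a + len → p c = true → (∀ x, a ≤ x → x < c → p x = false) →
    (List.range' a len).find? p = some c := by
  intro a len
  induction len generalizing a with
  | zero => intro c h1 h2 _ _; omega
  | succ len ih =>
    intro c h1 h2 hp hmin
    rw [List.range'_succ]
    rcases eq_or_lt_of_le h1 with rfl | hlt
    · rw [List.find?_cons_of_pos hp]
    · rw [List.find?_cons_of_neg (by simp [hmin a (le_refl _) hlt])]
      exact ih hlt (by omega) hp (fun x hx1 hx2 => hmin x (by omega) hx2)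

lemma invW_le_count (w : List ℕ) (c a : ℕ) : invW w c a ≤ w.count c :=
  ((List.takeWhile_prefix _).sublist).count_le c

lemma count_take_le_invW {w : List ℕ} {m a : ℕ} (h : (w.take m).count a = 0) (c : ℕ) :
    (w.take m).count c ≤ invW w c a :=
  ((take_prefix_takeWhile h).sublist).count_le c

lemma invW_le_count_take {w : List ℕ} {m a : ℕ} (h : 0 < (w.take m).count a) (c : ℕ) :
    invW w c a ≤ (w.take m).count c :=
  ((takeWhile_prefix_take h).sublist).count_le c

/- ### key lemma : characterization of routeOfPrefix on prefixes of w -/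

lemma routeOfPrefix_eq_iff (n : ℕ) (s : ℕ → ℕ) (hs : ∀ i, 1 ≤ i → i ≤ n → 1 ≤ s i)
    (w : List ℕ) (hwc : ∀ i, 1 ≤ i → i ≤ n → w.count i = s i)
    (k t : ℕ) (δ : ℕ → Bool) (hR : IsRoute s n ⟨k, t, δ⟩) (m : ℕ) :
    routeOfPrefix s n (w.take m) = ⟨k, t, δ⟩ ↔
      ((k ≤ n → (w.take m).count k = t) ∧
        ∀ i, 1 ≤ i → i < k → (w.take m).count i = if δ i then s i else 0) := by
  have hk1 : 1 ≤ k := hR.1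
  have hk2 : k ≤ n + 1 := hR.2.1
  have ht1 : 1 ≤ t := hR.2.2.1
  have ht2 : t + 1 ≤ sExt s n k := hR.2.2.2.1
  have hδ0 : ∀ i, i = 0 ∨ k ≤ i → δ i = false := hR.2.2.2.2
  set u := w.take m with hu
  have hule : ∀ i, 1 ≤ i → i ≤ n → u.count i ≤ s i := fun i hi1 hi2 => by
    rw [← hwc i hi1 hi2]; exact count_take_le w i m
  cases hfind : (List.range' 1 n).find? (fun c => decide (0 < u.count c ∧ u.count c < s c)) with
  | some c =>
    obtain ⟨hpc, hc1, hc2, hmin⟩ := find?_range'_eq_some hfind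
    have hpc' : 0 < u.count c ∧ u.count c < s c := by simpa using hpc
    have hmin' : ∀ x, 1 ≤ x → x < c → ¬(0 < u.count x ∧ u.count x < s x) := by
      intro x h1x h2x
      have := hmin x h1x h2x
      simpa using this
    rw [routeOfPrefix, hfind]
    constructor
    · intro h
      rw [Route.mk.injEq] at h
      obtain ⟨hck, hct, hδeq⟩ := h
      subst hck
      refine ⟨fun _ => hct, fun i hi1 hi2 => ?_⟩
      have hin : i ≤ n := by omega
      by_cases his : u.count i = s i
      · have hδt : δ i = true := by
          rw [← hδeq]; simp [hi1, hi2, his]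
        rw [hδt, if_pos rfl]; exact his
      · have hcnt0 : u.count i = 0 := by
          have h5 := hmin' i hi1 hi2
          have h6 := hule i hi1 hin
          omega
        have hδf : δ i = false := by
          rw [← hδeq]; simp [his]
        rw [hδf, if_neg (by simp)]; exact hcnt0
    · rintro ⟨hq1, hq2⟩
      have hkn : k ≤ n := by
        by_contra hcc
        have hv := hq2 c hc1 (by omega)
        by_cases hh : δ c = true
        · rw [if_pos hh] at hv; omega
        · rw [if_neg hh] at hv; omega
      have hck : c = k := by
        by_contra hne
        rcases lt_or_gt_of_ne hne with hlt | hlt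
        · have hv := hq2 c hc1 hlt
          by_cases hh : δ c = true
          · rw [if_pos hh] at hv; omega
          · rw [if_neg hh] at hv; omega
        · have hsk : sExt s n k = s k := by rw [sExt, if_neg (by omega)]
          have hopen : 0 < u.count k ∧ u.count k < s k := by
            rw [hq1 hkn]; omega
          exact absurd hopen (hmin' k hk1 hlt)
      subst hck
      rw [Route.mk.injEq]
      refine ⟨rfl, hq1 hkn, funext fun i => ?_⟩
      by_cases hi : 1 ≤ i ∧ i < c
      · have hv := hq2 i hi.1 hi.2
        by_cases hh : δ i = true
        · rw [if_pos hh] at hv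
          simp [hh, hi.1, hi.2, hv]
        · rw [if_neg hh] at hv
          have hne2 : ¬ (u.count i = s i) := by
            have hsi := hs i hi.1 (by omega)
            omega
          simp only [Bool.not_eq_true] at hh
          simp [hh, hne2]
      · have hδf : δ i = false := hδ0 i (by omega)
        rw [hδf]
        simp only [decide_eq_false_iff_not]
        intro hcon
        exact hi ⟨hcon.1, hcon.2.1⟩
  | none =>
    have hnone : ∀ x, 1 ≤ x → x ≤ n → ¬(0 < u.count x ∧ u.count x < s x) := by
      intro x h1 h2
      have := List.find?_eq_none.mp hfind x (by simp [List.mem_range'_1]; omega)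
      simpa using this
    rw [routeOfPrefix, hfind]
    constructor
    · intro h
      rw [Route.mk.injEq] at h
      obtain ⟨hck, hct, hδeq⟩ := h
      refine ⟨fun hkn => by omega, fun i hi1 hi2 => ?_⟩
      have hin : i ≤ n := by omega
      by_cases his : u.count i = s i
      · have hδt : δ i = true := by rw [← hδeq]; simp [hi1, hin, his]
        rw [hδt, if_pos rfl]; exact his
      · have hcnt0 : u.count i = 0 := by
          have h5 := hnone i hi1 hin
          have h6 := hule i hi1 hin
          omega
        have hδf : δ i = false := by rw [← hδeq]; simp [his]
        rw [hδf, if_neg (by simp)]; exact hcnt0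
    · rintro ⟨hq1, hq2⟩
      have hkn1 : k = n + 1 := by
        by_contra hcc
        have hkn : k ≤ n := by omega
        have hsk : sExt s n k = s k := by rw [sExt, if_neg (by omega)]
        have hopen : 0 < u.count k ∧ u.count k < s k := by rw [hq1 hkn]; omega
        exact absurd hopen (hnone k hk1 hkn)
      have ht : t = 1 := by
        rw [hkn1, sExt, if_pos rfl] at ht2; omega
      subst hkn1
      rw [Route.mk.injEq]
      refine ⟨rfl, ht.symm, funext fun i => ?_⟩
      by_cases hi : 1 ≤ i ∧ i ≤ n
      · have hv := hq2 i hi.1 (by omega)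
        by_cases hh : δ i = true
        · rw [if_pos hh] at hv
          simp [hh, hi.1, hi.2, hv]
        · rw [if_neg hh] at hv
          have hne2 : ¬ (u.count i = s i) := by
            have hsi := hs i hi.1 hi.2
            omega
          simp only [Bool.not_eq_true] at hh
          simp [hh, hne2]
      · have hδf : δ i = false := hδ0 i (by omega)
        rw [hδf]
        simp only [decide_eq_false_iff_not]
        intro hcon
        exact hi ⟨hcon.1, hcon.2.1⟩


/-- (Lemma 3.5 of the paper.) A route `R(k, t, δ)` of the
`s`-oruga graph is a vertex of the simplex `Δ_w`, for a Stirling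
`s`-permutation `w`, if and only if the inversion multiset of `w` satisfies:
(1) `#_w(k,i) ≥ t` for all `i < k` with `δ_i = 0`;
(2) `#_w(k,i) ≤ t` for all `i < k` with `δ_i = 1`;
(3) `#_w(j,i) = 0` for all `i < j < k` with `(δ_i, δ_j) = (1, 0)`;
(4) `#_w(j,i) = s_j` for all `i < j < k` with `(δ_i, δ_j) = (0, 1)`. -/
theorem route_mem_DeltaW_iff (n : ℕ) (hn : 0 < n) (s : ℕ → ℕ)
    (hs : ∀ i, 1 ≤ i → i ≤ n → 1 ≤ s i)
    (w : List ℕ) (hw : IsStirling s n w)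
    (k t : ℕ) (δ : ℕ → Bool)
    (hR : IsRoute s n ⟨k, t, δ⟩) :
    (⟨k, t, δ⟩ : Route) ∈ DeltaW s n w ↔
      ((∀ i, 1 ≤ i → i < k → δ i = false → t ≤ invWx n w k i) ∧
       (∀ i, 1 ≤ i → i < k → δ i = true → invWx n w k i ≤ t) ∧
       (∀ i j, 1 ≤ i → i < j → j < k → δ i = true → δ j = false → invW w j i = 0) ∧
       (∀ i j, 1 ≤ i → i < j → j < k → δ i = false → δ j = true → invW w j i = s j)) := by
  obtain ⟨hwmem, hwc, hav⟩ := hw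
  have hk1 : 1 ≤ k := hR.1
  have hk2 : k ≤ n + 1 := hR.2.1
  have ht1 : 1 ≤ t := hR.2.2.1
  have ht2 : t + 1 ≤ sExt s n k := hR.2.2.2.1
  have hδ0 : ∀ i, i = 0 ∨ k ≤ i → δ i = false := hR.2.2.2.2
  have key := routeOfPrefix_eq_iff n s hs w hwc k t δ hR
  have htn1 : k = n + 1 → t = 1 := by
    intro h; rw [h, sExt, if_pos rfl] at ht2; omega
  have hxw : ∀ i, k ≤ n → invWx n w k i = invW w k i := by
    intro i hkn; rw [invWx, if_neg (by omega)]
  have hskk : k ≤ n → t + 1 ≤ s k := by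
    intro hkn; rwa [sExt, if_neg (by omega)] at ht2
  constructor
  · rintro ⟨m, hm, heq⟩
    obtain ⟨hq1, hq2⟩ := (key m).mp heq.symm
    have hcnt : ∀ i, 1 ≤ i → i < k → (w.take m).count i = if δ i then s i else 0 := hq2
    refine ⟨?_, ?_, ?_, ?_⟩
    · intro i hi1 hik hδf
      rcases Nat.lt_or_ge n k with hnk | hkn
      · have : k = n + 1 := by omega
        rw [invWx, if_pos this, htn1 this]
      · rw [hxw i hkn]
        have hc0 : (w.take m).count i = 0 := by
          rw [hcnt i hi1 hik, if_neg (by simp [hδf])]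
        have := count_take_le_invW hc0 k
        rw [hq1 hkn] at this
        exact this
    · intro i hi1 hik hδt
      rcases Nat.lt_or_ge n k with hnk | hkn
      · have hkn1 : k = n + 1 := by omega
        rw [invWx, if_pos hkn1, htn1 hkn1]
      · rw [hxw i hkn]
        have hcs : (w.take m).count i = s i := by
          rw [hcnt i hi1 hik, if_pos hδt]
        have hpos : 0 < (w.take m).count i := by
          rw [hcs]; exact hs i hi1 (by omega)
        have := invW_le_count_take hpos k
        rw [hq1 hkn] at this
        exact this
    · intro i j hi1 hij hjk hδit hδjf
      have hin : i ≤ n := by omega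
      have hcs : (w.take m).count i = s i := by
        rw [hcnt i hi1 (by omega), if_pos hδit]
      have hpos : 0 < (w.take m).count i := by
        rw [hcs]; exact hs i hi1 hin
      have hj0 : (w.take m).count j = 0 := by
        rw [hcnt j (by omega) hjk, if_neg (by simp [hδjf])]
      have := invW_le_count_take hpos j
      omega
    · intro i j hi1 hij hjk hδif hδjt
      have hjn : j ≤ n := by omega
      have hc0 : (w.take m).count i = 0 := by
        rw [hcnt i hi1 (by omega), if_neg (by simp [hδif])]
      have hjs : (w.take m).count j = s j := by
        rw [hcnt j (by omega) hjk, if_pos hδjt]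
      have hle := count_take_le_invW hc0 j
      have hge := invW_le_count w j i
      rw [hwc j (by omega) hjn] at hge
      omega
  · rintro ⟨h1, h2, h3, h4⟩
    classical
    set P : ℕ → Prop := fun m =>
      (w.take m).count k ≤ t ∧
      ∀ i, 1 ≤ i → i < k → δ i = false → (w.take m).count i = 0 with hPdef
    set m := Nat.findGreatest P w.length with hmdef
    have hP0 : P 0 := by
      constructor
      · simp
      · intro i _ _ _; simp
    have hPm : P m := Nat.findGreatest_spec (Nat.zero_le _) hP0
    have hmle : m ≤ w.length := Nat.findGreatest_le _
    have hmax : ∀ m', m < m' → m' ≤ w.length → ¬ P m' := fun m' hlt hle =>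
      Nat.findGreatest_is_greatest hlt hle
    have step0 : ∀ i, 1 ≤ i → i < k → δ i = false → (w.take m).count i = 0 := hPm.2
    have hcntw : ∀ i, 1 ≤ i → i ≤ n → w.count i = s i := hwc
    have hn1notmem : ∀ m', (w.take m').count (n + 1) = 0 := by
      intro m'
      have : (n + 1) ∉ w := by
        intro hmem
        have := hwmem _ hmem
        omega
      have : w.count (n + 1) = 0 := List.count_eq_zero.mpr this
      have := count_take_le w (n + 1) m'
      omega
    -- step 1 : if k ≤ n then the count of k at m is exactly t
    have step1 : k ≤ n → (w.take m).count k = t := by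
      intro hkn
      by_contra hne
      have hlt : (w.take m).count k < t := by
        have := hPm.1; omega
      have hmlen : m < w.length := by
        rcases Nat.lt_or_ge m w.length with h | h
        · exact h
        · exfalso
          have hmw : m = w.length := by omega
          have : (w.take m).count k = s k := by
            rw [hmw, List.take_length, hwc k hk1 hkn]
          have := hskk hkn
          omega
      have hPm1 : P (m + 1) := by
        constructor
        · have := count_take_succ_le w m k
          omega
        · intro i' hi'1 hi'k hδf
          by_contra hpos0
          have hpos : 0 < (w.take (m+1)).count i' := by omega
          have h0 : (w.take m).count i' = 0 := step0 i' hi'1 hi'k hδf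
          have hkk : (w.take (m+1)).count k = (w.take m).count k :=
            count_take_succ_eq w (a := i') k (by omega) (by omega)
          have hinv := invW_le_count_take hpos k
          have hcond := h1 i' hi'1 hi'k hδf
          rw [hxw i' hkn] at hcond
          omega
      exact hmax (m+1) (Nat.lt_succ_self m) (by omega) hPm1
    -- step 2 : letters below k with δ = true are complete at m
    have step2 : ∀ i, 1 ≤ i → i < k → δ i = true → (w.take m).count i = s i := by
      intro i hi1 hik hδt
      have hin : i ≤ n := by omega
      by_contra hne
      have hle : (w.take m).count i ≤ s i := by
        have := count_take_le w i m
        rw [hwc i hi1 hin] at this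
        omega
      have hlt : (w.take m).count i < s i := by omega
      have hciw : w.count i = s i := hwc i hi1 hin
      have hmlen : m < w.length := by
        rcases Nat.lt_or_ge m w.length with h | h
        · exact h
        · exfalso
          have hmw : m = w.length := by omega
          rw [hmw, List.take_length] at hlt
          omega
      have hnP : ¬ ((w.take (m+1)).count k ≤ t ∧
          ∀ i, 1 ≤ i → i < k → δ i = false → (w.take (m+1)).count i = 0) :=
        hmax (m+1) (Nat.lt_succ_self m) (by omega)
      push_neg at hnP
      rcases Nat.lt_or_ge t ((w.take (m+1)).count k) with hbig | hok
      · -- the letter at position m is the (t+1)-st copy of k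
        have hkn : k ≤ n := by
          by_contra hcc
          have : k = n + 1 := by omega
          rw [this] at hbig
          have := hn1notmem (m+1)
          omega
        have hct : (w.take m).count k = t := step1 hkn
        have hincr : (w.take m).count k < (w.take (m+1)).count k := by omega
        have hii : (w.take (m+1)).count i = (w.take m).count i :=
          count_take_succ_eq w i (by omega) hincr
        by_cases h0 : (w.take m).count i = 0
        · have h0' : (w.take (m+1)).count i = 0 := by omega
          have := count_take_le_invW h0' k
          have hcond := h2 i hi1 hik hδt
          rw [hxw i hkn] at hcond
          omega
        · exact no121 hav (show i < k by omega) (by omega)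
            (show (w.take m).count k < (w.take (m+1)).count k from hincr)
            (by omega)
      · -- some forbidden letter i' appears at position m
        obtain ⟨i', hi'1, hi'k, hδ'f, hpos0⟩ := hnP hok
        have h0' : (w.take m).count i' = 0 := step0 i' hi'1 hi'k hδ'f
        have hpos : 0 < (w.take (m+1)).count i' := by omega
        have hii' : i ≠ i' := by
          intro hcon; rw [hcon] at hδt; rw [hδt] at hδ'f; exact absurd hδ'f (by simp)
        have hieq : (w.take (m+1)).count i = (w.take m).count i :=
          count_take_succ_eq w i hii' (by omega)
        rcases Nat.lt_or_ge i i' with hlt' | hge'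
        · -- i < i' : use condition (3)
          have hcond := h3 i i' hi1 hlt' hi'k hδt hδ'f
          by_cases h0 : (w.take m).count i = 0
          · have h0'' : (w.take (m+1)).count i = 0 := by omega
            have := count_take_le_invW h0'' i'
            omega
          · exact no121 hav hlt' (p := m) (q := m+1) (by omega) (by omega) (by omega)
        · -- i' < i : use condition (4)
          have hlt' : i' < i := by omega
          have hcond := h4 i' i hi'1 hlt' hik hδ'f hδt
          have := invW_le_count_take hpos i
          omega
    have hQ : (k ≤ n → (w.take m).count k = t) ∧
        ∀ i, 1 ≤ i → i < k → (w.take m).count i = if δ i then s i else 0 := by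
      refine ⟨step1, fun i hi1 hik => ?_⟩
      by_cases hh : δ i = true
      · rw [if_pos hh]; exact step2 i hi1 hik hh
      · rw [if_neg hh]
        exact step0 i hi1 hik (by simpa using hh)
    exact ⟨m, hmle, ((key m).mpr hQ).symm⟩

end SPermutahedron
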